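/- Let a ∈ (ℓ₀)^{r×r} and u ∈ (ℓ₀)^r be supported in [−N,N], w_0 : ℤ → ℂ^{1×r}, and φ : ℝ → ℂ^r be supported in [−N,N] with φ ∈ (C^j)^r. Define η := ∑_{k∈ℤ} w_0(k) φ(·−k). Then for every K > 0, n ∈ ℕ, and β_j ∈ ℂ: max_{k∈ℤ∩[−2^nK, 2^nK]} |[(S_a^n w_0)∗u](k) 2^{jn} − β_j η^{(j)}(2^{−n}k)| ≤ C_{K,N,w_0} · sup_{k∈ℤ} ‖[(S_a^n(δI_r))∗u](k) 2^{jn} − β_j φ^{(j)}(2^{−n}k)‖, where C_{K,N,w_0} := ∑_{ℓ=−N−K}^{N+K} ‖w_0(ℓ)‖. -/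

import Mathlib

/-- The vector subdivision operator acting on matrix-valued sequences. -/
noncomputable def sdOp {r : ℕ} (a : ℤ → Matrix (Fin r) (Fin r) ℂ)
    (v : ℤ → Matrix (Fin r) (Fin r) ℂ) (j : ℤ) : Matrix (Fin r) (Fin r) ℂ :=
  (2 : ℂ) • ∑ᶠ k : ℤ, v k * a (j - 2 * k)

/-- The vector subdivision operator acting on row-vector-valued sequences. -/
noncomputable def sdRow {r : ℕ} (a : ℤ → Matrix (Fin r) (Fin r) ℂ)
    (v : ℤ → Fin r → ℂ) (j : ℤ) : Fin r → ℂ :=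
  (2 : ℂ) • ∑ᶠ k : ℤ, Matrix.vecMul (v k) (a (j - 2 * k))

/-- The Dirac sequence `δ I_r`. -/
noncomputable def diracI {r : ℕ} : ℤ → Matrix (Fin r) (Fin r) ℂ :=
  fun k => if k = 0 then 1 else 0

/-! ### Auxiliary lemmas -/

section Aux

open Finset

/-- dot product with a fixed row vector, as a continuous `ℝ`-linear map. -/
noncomputable def dotCLM {r : ℕ} (w : Fin r → ℂ) : (Fin r → ℂ) →L[ℝ] ℂ :=
  (∑ i, w i • (ContinuousLinearMap.proj i : (Fin r → ℂ) →L[ℂ] ℂ)).restrictScalars ℝ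

lemma dotCLM_apply {r : ℕ} (w v : Fin r → ℂ) : dotCLM w v = dotProduct w v := by
  simp [dotCLM, dotProduct, ContinuousLinearMap.sum_apply, smul_eq_mul]

lemma clm_iteratedDeriv {F G : Type*} [NormedAddCommGroup F] [NormedSpace ℝ F]
    [NormedAddCommGroup G] [NormedSpace ℝ G] (L : F →L[ℝ] G) {f : ℝ → F} {j : ℕ}
    (hf : ContDiff ℝ (j : ℕ∞) f) (x : ℝ) :
    iteratedDeriv j (fun y => L (f y)) x = L (iteratedDeriv j f x) := by
  have h := L.iteratedFDeriv_comp_left (x := x) hf.contDiffAt (by exact_mod_cast le_rfl)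
  rw [iteratedDeriv_eq_iteratedFDeriv, iteratedDeriv_eq_iteratedFDeriv]
  have h2 : (fun y => L (f y)) = ⇑L ∘ f := rfl
  rw [h2, h]
  rfl

lemma iteratedDeriv_add' {j : ℕ} {f g : ℝ → ℂ} (hf : ContDiff ℝ (j : ℕ∞) f)
    (hg : ContDiff ℝ (j : ℕ∞) g) (x : ℝ) :
    iteratedDeriv j (fun y => f y + g y) x = iteratedDeriv j f x + iteratedDeriv j g x := by
  have := iteratedDerivWithin_add (Set.mem_univ x) uniqueDiffOn_univ
    hf.contDiffAt.contDiffWithinAt hg.contDiffAt.contDiffWithinAt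
  simpa [iteratedDerivWithin_univ, Pi.add_def] using this

lemma iteratedDeriv_zero_fun' {F : Type*} [NormedAddCommGroup F] [NormedSpace ℝ F] {j : ℕ}
    (x : ℝ) : iteratedDeriv j (fun _ : ℝ => (0 : F)) x = 0 := by
  rw [iteratedDeriv_eq_iteratedFDeriv, iteratedFDeriv_zero_fun]
  rfl

lemma iteratedDeriv_finset_sum {ι : Type*} (s : Finset ι) {F : ι → ℝ → ℂ} {j : ℕ}
    (h : ∀ i ∈ s, ContDiff ℝ (j : ℕ∞) (F i)) (x : ℝ) :
    iteratedDeriv j (fun y => ∑ i ∈ s, F i y) x = ∑ i ∈ s, iteratedDeriv j (F i) x := by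
  classical
  induction s using Finset.induction with
  | empty => simpa using iteratedDeriv_zero_fun' x
  | insert b s hni ih =>
    have h1 : ContDiff ℝ (j : ℕ∞) (F b) := h b (Finset.mem_insert_self b s)
    have h2 : ContDiff ℝ (j : ℕ∞) (fun y => ∑ i ∈ s, F i y) :=
      ContDiff.sum fun i hi => h i (Finset.mem_insert_of_mem hi)
    simp only [Finset.sum_insert hni]
    rw [iteratedDeriv_add' h1 h2 x, ih (fun i hi => h i (Finset.mem_insert_of_mem hi))]

lemma finsum_eq_sum_Icc {M : Type*} [AddCommMonoid M] (f : ℤ → M) {lo hi : ℤ}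
    (h : ∀ m, f m ≠ 0 → lo ≤ m ∧ m ≤ hi) :
    ∑ᶠ m, f m = ∑ m ∈ Finset.Icc lo hi, f m := by
  apply finsum_eq_sum_of_support_subset
  intro m hm
  simp only [Finset.coe_Icc, Set.mem_Icc]
  exact h m hm

lemma sum_vecMul' {r : ℕ} {ι : Type*} (s : Finset ι) (f : ι → Fin r → ℂ)
    (M : Matrix (Fin r) (Fin r) ℂ) :
    Matrix.vecMul (∑ i ∈ s, f i) M = ∑ i ∈ s, Matrix.vecMul (f i) M := by
  classical
  induction s using Finset.cons_induction with
  | empty => simp [Matrix.zero_vecMul]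
  | cons b s hb ih => rw [Finset.sum_cons, Finset.sum_cons, Matrix.add_vecMul, ih]

lemma vecMul_sum' {r : ℕ} {ι : Type*} (s : Finset ι) (v : Fin r → ℂ)
    (M : ι → Matrix (Fin r) (Fin r) ℂ) :
    Matrix.vecMul v (∑ i ∈ s, M i) = ∑ i ∈ s, Matrix.vecMul v (M i) := by
  classical
  induction s using Finset.cons_induction with
  | empty => simp [Matrix.vecMul_zero]
  | cons b s hb ih => rw [Finset.sum_cons, Finset.sum_cons, Matrix.vecMul_add, ih]

lemma vecMul_smulM {r : ℕ} (v : Fin r → ℂ) (c : ℂ) (M : Matrix (Fin r) (Fin r) ℂ) :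
    Matrix.vecMul v (c • M) = c • Matrix.vecMul v M := by
  ext j'
  simp only [Matrix.vecMul, dotProduct, Matrix.smul_apply, smul_eq_mul, Pi.smul_apply,
    Finset.mul_sum]
  exact Finset.sum_congr rfl fun i _ => by ring

lemma sum_dotProduct' {r : ℕ} {ι : Type*} (s : Finset ι) (f : ι → Fin r → ℂ) (v : Fin r → ℂ) :
    dotProduct (∑ i ∈ s, f i) v = ∑ i ∈ s, dotProduct (f i) v := by
  classical
  induction s using Finset.cons_induction with
  | empty => simp
  | cons b s hb ih => rw [Finset.sum_cons, Finset.sum_cons, add_dotProduct, ih]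

lemma dotProduct_sum' {r : ℕ} {ι : Type*} (s : Finset ι) (v : Fin r → ℂ) (f : ι → Fin r → ℂ) :
    dotProduct v (∑ i ∈ s, f i) = ∑ i ∈ s, dotProduct v (f i) := by
  classical
  induction s using Finset.cons_induction with
  | empty => simp
  | cons b s hb ih => rw [Finset.sum_cons, Finset.sum_cons, dotProduct_add, ih]

lemma abs_dot_le {r : ℕ} (w v : Fin r → ℂ) :
    ‖dotProduct w v‖ ≤ (∑ i, ‖w i‖) * ‖v‖ := by
  calc ‖∑ i, w i * v i‖ ≤ ∑ i, ‖w i * v i‖ :=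
        norm_sum_le _ _
    _ ≤ ∑ i, ‖w i‖ * ‖v‖ := by
        apply Finset.sum_le_sum
        intro i _
        rw [norm_mul]
        exact mul_le_mul_of_nonneg_left (norm_le_pi_norm v i)
          (norm_nonneg _)
    _ = (∑ i, ‖w i‖) * ‖v‖ := (Finset.sum_mul _ _ _).symm

lemma abs_pow_two_mul (n : ℕ) (q : ℤ) : |(2 : ℤ) ^ n * q| = 2 ^ n * |q| := by
  rw [abs_mul, abs_pow]
  norm_num

end Aux

section Main

variable {r : ℕ} {N : ℕ} {a : ℤ → Matrix (Fin r) (Fin r) ℂ}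

/-- Support of the iterated mask. -/
lemma sdA_support (ha : ∀ k : ℤ, a k ≠ 0 → |k| ≤ (N : ℤ)) :
    ∀ (n : ℕ) (k : ℤ), ((sdOp a)^[n] diracI) k ≠ 0 → |k| ≤ ((2 : ℤ) ^ n - 1) * N := by
  intro n
  induction n with
  | zero =>
    intro k h
    have hk : k = 0 := by
      by_contra h0
      exact h (by simp [diracI, h0])
    simp [hk]
  | succ n ih =>
    intro k h
    rw [Function.iterate_succ_apply'] at h
    rw [sdOp] at h
    have h2 : (∑ᶠ m : ℤ, ((sdOp a)^[n] diracI) m * a (k - 2 * m)) ≠ 0 := by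
      intro h0
      exact h (by rw [h0, smul_zero])
    obtain ⟨m, hm⟩ : ∃ m : ℤ, ((sdOp a)^[n] diracI) m * a (k - 2 * m) ≠ 0 := by
      by_contra hc
      push_neg at hc
      exact h2 ((finsum_congr hc).trans finsum_zero)
    have hAm : ((sdOp a)^[n] diracI) m ≠ 0 := fun h0 => hm (by rw [h0, zero_mul])
    have ham : a (k - 2 * m) ≠ 0 := fun h0 => hm (by rw [h0, mul_zero])
    have h3 := ih m hAm
    have h4 := ha _ ham
    have h5 : |k| ≤ |k - 2 * m| + 2 * |m| := by
      calc |k| = |(k - 2 * m) + 2 * m| := by rw [sub_add_cancel]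
        _ ≤ |k - 2 * m| + |2 * m| := abs_add_le _ _
        _ = |k - 2 * m| + 2 * |m| := by rw [abs_mul]; norm_num
    have h6 : (2 : ℤ) ^ (n + 1) = 2 * 2 ^ n := by ring
    nlinarith [abs_nonneg k, abs_nonneg m, Int.natCast_nonneg N]

/-- The iterated subdivision of a row sequence expands over the iterated mask. -/
lemma iter_row (ha : ∀ k : ℤ, a k ≠ 0 → |k| ≤ (N : ℤ)) (w₀ : ℤ → Fin r → ℂ) :
    ∀ (n : ℕ) (k : ℤ), ((sdRow a)^[n] w₀) k =
      ∑ᶠ l : ℤ, Matrix.vecMul (w₀ l) (((sdOp a)^[n] diracI) (k - 2 ^ n * l)) := by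
  intro n
  induction n with
  | zero =>
    intro k
    simp only [Function.iterate_zero, id_eq, pow_zero, one_mul]
    rw [finsum_eq_single _ k]
    · simp [diracI, Matrix.vecMul_one]
    · intro l hl
      have : k - l ≠ 0 := by omega
      simp [diracI, this, Matrix.vecMul_zero]
  | succ n ih =>
    intro k
    set A : ℤ → Matrix (Fin r) (Fin r) ℂ := (sdOp a)^[n] diracI with hA
    have hNn : (0 : ℤ) ≤ N := Int.natCast_nonneg N
    have hp : (0 : ℤ) < 2 ^ n := pow_pos (by norm_num) n
    set s : Finset ℤ := Finset.Icc (-(|k| + N)) (|k| + N) with hs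
    set t : Finset ℤ := Finset.Icc (-(|k| + 2 * N)) (|k| + 2 * N) with ht
    -- membership criteria
    have hmem_s : ∀ m : ℤ, a (k - 2 * m) ≠ 0 → m ∈ s := by
      intro m hm
      have h1 := ha _ hm
      have h2 : |2 * m| - |k| ≤ |2 * m - k| := abs_sub_abs_le_abs_sub _ _
      rw [abs_sub_comm] at h2
      have h3 : |2 * m| = 2 * |m| := by rw [abs_mul]; norm_num
      simp only [hs, Finset.mem_Icc]
      have := abs_nonneg k
      have := abs_nonneg m
      constructor <;> [nlinarith [neg_abs_le m]; nlinarith [le_abs_self m]]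
    have hmem_t : ∀ (l m : ℤ), m ∈ s → A (m - 2 ^ n * l) ≠ 0 → l ∈ t := by
      intro l m hms hl
      have h1 := sdA_support ha n _ hl
      have h2 : |2 ^ n * l| - |m| ≤ |2 ^ n * l - m| := abs_sub_abs_le_abs_sub _ _
      rw [abs_sub_comm] at h2
      rw [abs_pow_two_mul] at h2
      simp only [hs, Finset.mem_Icc] at hms
      have hms' : |m| ≤ |k| + N := abs_le.2 hms
      have h3 : 2 ^ n * |l| ≤ |k| + N + (2 ^ n - 1) * N := by linarith
      have h4 : 2 ^ n * |l| ≤ 2 ^ n * (|k| + 2 * N) := by nlinarith [abs_nonneg k]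
      have h5 : |l| ≤ |k| + 2 * N := le_of_mul_le_mul_left h4 hp
      simp only [ht, Finset.mem_Icc]
      exact abs_le.1 h5
    have hmem_t' : ∀ l : ℤ, ((sdOp a)^[n + 1] diracI) (k - 2 ^ (n + 1) * l) ≠ 0 → l ∈ t := by
      intro l hl
      have h1 := sdA_support ha (n + 1) _ hl
      have h2 : |2 ^ (n + 1) * l| - |k| ≤ |2 ^ (n + 1) * l - k| := abs_sub_abs_le_abs_sub _ _
      rw [abs_sub_comm] at h2
      rw [abs_pow_two_mul] at h2
      have h3 : (2 : ℤ) ^ (n + 1) * |l| ≤ 2 ^ (n + 1) * (|k| + 2 * N) := by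
        have : (2 : ℤ) ^ (n + 1) = 2 * 2 ^ n := by ring
        nlinarith [abs_nonneg k, abs_nonneg l]
      have h5 : |l| ≤ |k| + 2 * N :=
        le_of_mul_le_mul_left h3 (pow_pos (by norm_num) (n + 1))
      simp only [ht, Finset.mem_Icc]
      exact abs_le.1 h5
    -- LHS
    rw [Function.iterate_succ_apply', sdRow]
    have e1 : (∑ᶠ m : ℤ, Matrix.vecMul (((sdRow a)^[n] w₀) m) (a (k - 2 * m))) =
        ∑ m ∈ s, Matrix.vecMul (((sdRow a)^[n] w₀) m) (a (k - 2 * m)) := by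
      apply finsum_eq_sum_Icc
      intro m hm
      have ham : a (k - 2 * m) ≠ 0 := by
        intro h0
        exact hm (by rw [h0, Matrix.vecMul_zero])
      simpa [hs, Finset.mem_Icc] using hmem_s m ham
    rw [e1]
    have e2 : ∀ m ∈ s, Matrix.vecMul (((sdRow a)^[n] w₀) m) (a (k - 2 * m)) =
        ∑ l ∈ t, Matrix.vecMul (w₀ l) (A (m - 2 ^ n * l) * a (k - 2 * m)) := by
      intro m hms
      rw [ih m]
      have e21 : (∑ᶠ l : ℤ, Matrix.vecMul (w₀ l) (A (m - 2 ^ n * l))) =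
          ∑ l ∈ t, Matrix.vecMul (w₀ l) (A (m - 2 ^ n * l)) := by
        apply finsum_eq_sum_Icc
        intro l hl
        have hAl : A (m - 2 ^ n * l) ≠ 0 := by
          intro h0
          exact hl (by rw [h0, Matrix.vecMul_zero])
        simpa [ht, Finset.mem_Icc] using hmem_t l m hms hAl
      rw [e21, sum_vecMul']
      exact Finset.sum_congr rfl fun l _ => Matrix.vecMul_vecMul _ _ _
    rw [Finset.sum_congr rfl e2, Finset.sum_comm]
    -- RHS
    have e3 : (∑ᶠ l : ℤ, Matrix.vecMul (w₀ l) (((sdOp a)^[n + 1] diracI) (k - 2 ^ (n + 1) * l))) =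
        ∑ l ∈ t, Matrix.vecMul (w₀ l) (((sdOp a)^[n + 1] diracI) (k - 2 ^ (n + 1) * l)) := by
      apply finsum_eq_sum_Icc
      intro l hl
      have hAl : ((sdOp a)^[n + 1] diracI) (k - 2 ^ (n + 1) * l) ≠ 0 := by
        intro h0
        exact hl (by rw [h0, Matrix.vecMul_zero])
      simpa [ht, Finset.mem_Icc] using hmem_t' l hAl
    rw [e3, Finset.smul_sum]
    apply Finset.sum_congr rfl
    intro l _
    -- pointwise identity in l
    have e4 : ((sdOp a)^[n + 1] diracI) (k - 2 ^ (n + 1) * l) =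
        (2 : ℂ) • ∑ m ∈ s, A (m - 2 ^ n * l) * a (k - 2 * m) := by
      rw [Function.iterate_succ_apply', sdOp]
      congr 1
      have e41 : (∑ᶠ m' : ℤ, A m' * a (k - 2 ^ (n + 1) * l - 2 * m')) =
          ∑ᶠ m : ℤ, A (m - 2 ^ n * l) * a (k - 2 ^ (n + 1) * l - 2 * (m - 2 ^ n * l)) := by
        exact (finsum_comp_equiv (Equiv.subRight ((2 : ℤ) ^ n * l))).symm
      rw [e41]
      have e42 : ∀ m : ℤ, A (m - 2 ^ n * l) * a (k - 2 ^ (n + 1) * l - 2 * (m - 2 ^ n * l)) =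
          A (m - 2 ^ n * l) * a (k - 2 * m) := by
        intro m
        congr 2
        ring
      rw [finsum_congr e42]
      apply finsum_eq_sum_Icc
      intro m hm
      have ham : a (k - 2 * m) ≠ 0 := by
        intro h0
        exact hm (by rw [h0, mul_zero])
      simpa [hs, Finset.mem_Icc] using hmem_s m ham
    rw [e4, vecMul_smulM, vecMul_sum']
end Main

/-- On `[−2^nK, 2^nK]`, the error of the subdivision data of any initial sequence `w₀` against
`η := ∑_k w₀(k)φ(·−k)` is controlled by `C_{K,N,w₀}` times the uniform error of the subdivision
data of `δ I_r` against `φ^{(j)}`. -/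
theorem subdivision_error_bound {r : ℕ} (N K : ℕ) (hK : 0 < K)
    (a : ℤ → Matrix (Fin r) (Fin r) ℂ) (ha : ∀ k : ℤ, a k ≠ 0 → |k| ≤ (N : ℤ))
    (u : ℤ → Fin r → ℂ) (hu : ∀ k : ℤ, u k ≠ 0 → |k| ≤ (N : ℤ))
    (w₀ : ℤ → Fin r → ℂ)
    (j : ℕ) (φ : ℝ → Fin r → ℂ) (hφc : ContDiff ℝ (j : ℕ∞) φ)
    (hφs : ∀ x : ℝ, (N : ℝ) < |x| → φ x = 0)
    (β : ℂ) (n : ℕ) (B : ℝ)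
    (hB : ∀ k : ℤ,
      ‖(2 : ℂ) ^ (j * n) • (∑ᶠ l : ℤ, (((sdOp a)^[n] diracI) (k - l)).mulVec (u l)) -
        β • iteratedDeriv j φ (((2 : ℝ) ^ n)⁻¹ * (k : ℝ))‖ ≤ B) :
    ∀ k : ℤ, |k| ≤ 2 ^ n * (K : ℤ) →
      ‖(2 : ℂ) ^ (j * n) *
          (∑ᶠ l : ℤ, dotProduct (((sdRow a)^[n] w₀) (k - l)) (u l)) -
        β * iteratedDeriv j
          (fun x : ℝ => ∑ᶠ l : ℤ, dotProduct (w₀ l) (φ (x - (l : ℝ))))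
          (((2 : ℝ) ^ n)⁻¹ * (k : ℝ))‖ ≤
      (∑ l ∈ Finset.Icc (-(N : ℤ) - (K : ℤ)) ((N : ℤ) + (K : ℤ)),
        ∑ i : Fin r, ‖w₀ l i‖) * B := by
  intro k hk
  classical
  set A : ℤ → Matrix (Fin r) (Fin r) ℂ := (sdOp a)^[n] diracI with hAdef
  set x₀ : ℝ := ((2 : ℝ) ^ n)⁻¹ * (k : ℝ) with hx₀def
  have hpZ : (0 : ℤ) < 2 ^ n := pow_pos (by norm_num) n
  have hpR : (0 : ℝ) < 2 ^ n := by positivity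
  have hNn : (0 : ℤ) ≤ N := Int.natCast_nonneg N
  have hKn : (0 : ℤ) ≤ K := Int.natCast_nonneg K
  -- membership bound for the q-index
  have hq_mem : ∀ l q : ℤ, |l| ≤ (N : ℤ) → A (k - l - 2 ^ n * q) ≠ 0 →
      -(N : ℤ) - K ≤ q ∧ q ≤ (N : ℤ) + K := by
    intro l q hl hA
    have h1 := sdA_support ha n _ hA
    have e : (2 : ℤ) ^ n * q - (k - l) = -(k - l - 2 ^ n * q) := by ring
    have h2 : |(2 : ℤ) ^ n * q| - |k - l| ≤ |(2 : ℤ) ^ n * q - (k - l)| :=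
      abs_sub_abs_le_abs_sub _ _
    rw [e, abs_neg] at h2
    have h3 : |k - l| ≤ |k| + |l| := by
      rw [sub_eq_add_neg]
      exact (abs_add_le k (-l)).trans (by rw [abs_neg])
    have h4 : (2 : ℤ) ^ n * |q| ≤ 2 ^ n * ((N : ℤ) + K) := by
      rw [← abs_pow_two_mul]
      nlinarith [abs_nonneg q]
    have h5 : |q| ≤ (N : ℤ) + K := le_of_mul_le_mul_left h4 hpZ
    have := abs_le.1 h5
    omega
  -- step 1 : the convolution identity
  have hiter : ∀ m : ℤ, ((sdRow a)^[n] w₀) m =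
      ∑ᶠ l : ℤ, Matrix.vecMul (w₀ l) (A (m - 2 ^ n * l)) := iter_row ha w₀ n
  have hVsupp : ∀ q : ℤ, ∀ l : ℤ, (A (k - 2 ^ n * q - l)).mulVec (u l) ≠ 0 →
      -(N : ℤ) ≤ l ∧ l ≤ (N : ℤ) := by
    intro q l h
    have hul : u l ≠ 0 := fun h0 => h (by rw [h0, Matrix.mulVec_zero])
    exact abs_le.1 (hu l hul)
  have e_out : (∑ᶠ l : ℤ, dotProduct (((sdRow a)^[n] w₀) (k - l)) (u l)) =
      ∑ l ∈ Finset.Icc (-(N : ℤ)) (N : ℤ),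
        dotProduct (((sdRow a)^[n] w₀) (k - l)) (u l) := by
    apply finsum_eq_sum_Icc
    intro l hl
    have hul : u l ≠ 0 := fun h0 => hl (by rw [h0, dotProduct_zero])
    exact abs_le.1 (hu l hul)
  have step1 : ∀ l ∈ Finset.Icc (-(N : ℤ)) (N : ℤ),
      dotProduct (((sdRow a)^[n] w₀) (k - l)) (u l) =
      ∑ q ∈ Finset.Icc (-(N : ℤ) - (K : ℤ)) ((N : ℤ) + (K : ℤ)),
        dotProduct (Matrix.vecMul (w₀ q) (A (k - l - 2 ^ n * q))) (u l) := by
    intro l hl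
    have hls : |l| ≤ (N : ℤ) := abs_le.2 (Finset.mem_Icc.1 hl)
    have e1 : (∑ᶠ q : ℤ, Matrix.vecMul (w₀ q) (A (k - l - 2 ^ n * q))) =
        ∑ q ∈ Finset.Icc (-(N : ℤ) - (K : ℤ)) ((N : ℤ) + (K : ℤ)),
          Matrix.vecMul (w₀ q) (A (k - l - 2 ^ n * q)) := by
      apply finsum_eq_sum_Icc
      intro q hq
      have hA : A (k - l - 2 ^ n * q) ≠ 0 := by
        intro h0
        exact hq (by rw [h0, Matrix.vecMul_zero])
      exact hq_mem l q hls hA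
    rw [hiter (k - l)]
    have e2 : (∑ᶠ q : ℤ, Matrix.vecMul (w₀ q) (A (k - l - 2 ^ n * q))) =
        ∑ᶠ q : ℤ, Matrix.vecMul (w₀ q) (A (k - l - 2 ^ n * q)) := rfl
    rw [show (∑ᶠ q : ℤ, Matrix.vecMul (w₀ q) (A (k - l - 2 ^ n * q))) =
        ∑ q ∈ Finset.Icc (-(N : ℤ) - (K : ℤ)) ((N : ℤ) + (K : ℤ)),
          Matrix.vecMul (w₀ q) (A (k - l - 2 ^ n * q)) from e1, sum_dotProduct']
  have hconv : (∑ᶠ l : ℤ, dotProduct (((sdRow a)^[n] w₀) (k - l)) (u l)) =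
      ∑ q ∈ Finset.Icc (-(N : ℤ) - (K : ℤ)) ((N : ℤ) + (K : ℤ)),
        dotProduct (w₀ q) (∑ᶠ l : ℤ, (A (k - 2 ^ n * q - l)).mulVec (u l)) := by
    rw [e_out, Finset.sum_congr rfl step1, Finset.sum_comm]
    apply Finset.sum_congr rfl
    intro q _
    have step2 : ∀ l ∈ Finset.Icc (-(N : ℤ)) (N : ℤ),
        dotProduct (Matrix.vecMul (w₀ q) (A (k - l - 2 ^ n * q))) (u l) =
        dotProduct (w₀ q) ((A (k - 2 ^ n * q - l)).mulVec (u l)) := by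
      intro l _
      rw [show k - l - 2 ^ n * q = k - 2 ^ n * q - l from by ring]
      exact (Matrix.dotProduct_mulVec _ _ _).symm
    rw [Finset.sum_congr rfl step2, ← dotProduct_sum']
    congr 1
    exact (finsum_eq_sum_Icc _ (hVsupp q)).symm
  -- step 2 : the derivative identity
  have hkR : |((k : ℤ) : ℝ)| ≤ 2 ^ n * (K : ℝ) := by
    have h0 : ((|k| : ℤ) : ℝ) ≤ ((2 ^ n * (K : ℤ) : ℤ) : ℝ) := by exact_mod_cast hk
    push_cast at h0
    exact h0
  have hx₀K : |x₀| ≤ (K : ℝ) := by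
    have h1 : |x₀| = ((2 : ℝ) ^ n)⁻¹ * |((k : ℤ) : ℝ)| := by
      rw [hx₀def, abs_mul, abs_inv, abs_pow]
      norm_num
    have h2 : ((2 : ℝ) ^ n)⁻¹ * |((k : ℤ) : ℝ)| ≤ ((2 : ℝ) ^ n)⁻¹ * (2 ^ n * (K : ℝ)) :=
      mul_le_mul_of_nonneg_left hkR (by positivity)
    rw [h1]
    calc ((2 : ℝ) ^ n)⁻¹ * |((k : ℤ) : ℝ)| ≤ ((2 : ℝ) ^ n)⁻¹ * (2 ^ n * (K : ℝ)) := h2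
      _ = (K : ℝ) := by rw [← mul_assoc, inv_mul_cancel₀ (ne_of_gt hpR), one_mul]
  have hg : iteratedDeriv j
      (fun x : ℝ => ∑ᶠ l : ℤ, dotProduct (w₀ l) (φ (x - (l : ℝ)))) x₀ =
      ∑ q ∈ Finset.Icc (-(N : ℤ) - (K : ℤ)) ((N : ℤ) + (K : ℤ)),
        dotProduct (w₀ q) (iteratedDeriv j φ (x₀ - (q : ℝ))) := by
    have hloc : ∀ x ∈ Set.Ioo (x₀ - 1) (x₀ + 1),
        (∑ᶠ l : ℤ, dotProduct (w₀ l) (φ (x - (l : ℝ)))) =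
        ∑ q ∈ Finset.Icc (-(N : ℤ) - (K : ℤ)) ((N : ℤ) + (K : ℤ)),
          dotProduct (w₀ q) (φ (x - (q : ℝ))) := by
      intro x hx
      apply finsum_eq_sum_Icc
      intro l hl
      have hφl : φ (x - (l : ℝ)) ≠ 0 := fun h0 => hl (by rw [h0, dotProduct_zero])
      have hxl : |x - (l : ℝ)| ≤ N := by
        by_contra hcon
        exact hφl (hφs _ (lt_of_not_ge hcon))
      have hxb := abs_le.1 hx₀K
      have hxK : |x| < (K : ℝ) + 1 := by
        obtain ⟨hx1, hx2⟩ := hx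
        exact abs_lt.2 ⟨by linarith, by linarith⟩
      have e : (l : ℝ) = -(x - (l : ℝ)) + x := by ring
      have h1 : |(l : ℝ)| ≤ |x - (l : ℝ)| + |x| := by
        conv_lhs => rw [e]
        refine (abs_add_le _ _).trans ?_
        rw [abs_neg]
      have h2 : |(l : ℝ)| < (N : ℝ) + (K : ℝ) + 1 := by linarith
      have h3 : ((|l| : ℤ) : ℝ) < (((N : ℤ) + (K : ℤ) + 1 : ℤ) : ℝ) := by
        push_cast
        exact h2
      have h4 : |l| < (N : ℤ) + K + 1 := by exact_mod_cast h3
      have := abs_lt.1 h4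
      omega
    have hev : (fun x : ℝ => ∑ᶠ l : ℤ, dotProduct (w₀ l) (φ (x - (l : ℝ)))) =ᶠ[nhds x₀]
        (fun x : ℝ => ∑ q ∈ Finset.Icc (-(N : ℤ) - (K : ℤ)) ((N : ℤ) + (K : ℤ)),
          dotProduct (w₀ q) (φ (x - (q : ℝ)))) :=
      Filter.eventuallyEq_of_mem (Ioo_mem_nhds (by linarith) (by linarith)) hloc
    rw [Filter.EventuallyEq.iteratedDeriv_eq j hev]
    have hterm : ∀ q : ℤ, (fun x : ℝ => dotProduct (w₀ q) (φ (x - (q : ℝ)))) =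
        fun x : ℝ => dotCLM (w₀ q) (φ (x - (q : ℝ))) :=
      fun q => funext fun x => (dotCLM_apply _ _).symm
    have hψ : ∀ q : ℤ, ContDiff ℝ (j : ℕ∞) (fun x : ℝ => φ (x - (q : ℝ))) :=
      fun q => hφc.comp (contDiff_id.sub contDiff_const)
    have hc : ∀ q ∈ Finset.Icc (-(N : ℤ) - (K : ℤ)) ((N : ℤ) + (K : ℤ)),
        ContDiff ℝ (j : ℕ∞) (fun x : ℝ =>
        dotProduct (w₀ q) (φ (x - (q : ℝ)))) := by
      intro q _
      rw [hterm q]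
      exact ((dotCLM (w₀ q)).contDiff).comp (hψ q)
    rw [iteratedDeriv_finset_sum _ hc x₀]
    apply Finset.sum_congr rfl
    intro q _
    rw [hterm q, clm_iteratedDeriv (dotCLM (w₀ q)) (hψ q) x₀, dotCLM_apply]
    congr 1
    have h6 := iteratedDeriv_comp_add_const j φ (-(q : ℝ))
    have h7 : (fun z : ℝ => φ (z + -(q : ℝ))) = fun z : ℝ => φ (z - (q : ℝ)) := by
      funext z
      rw [← sub_eq_add_neg]
    rw [h7] at h6
    rw [congr_fun h6 x₀, ← sub_eq_add_neg]
  -- step 3 : assembling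
  have hBnn : (0 : ℝ) ≤ B := le_trans (norm_nonneg _) (hB 0)
  rw [hconv, hg]
  have hsum : (2 : ℂ) ^ (j * n) *
      (∑ q ∈ Finset.Icc (-(N : ℤ) - (K : ℤ)) ((N : ℤ) + (K : ℤ)),
        dotProduct (w₀ q) (∑ᶠ l : ℤ, (A (k - 2 ^ n * q - l)).mulVec (u l))) -
      β * ∑ q ∈ Finset.Icc (-(N : ℤ) - (K : ℤ)) ((N : ℤ) + (K : ℤ)),
        dotProduct (w₀ q) (iteratedDeriv j φ (x₀ - (q : ℝ))) =
      ∑ q ∈ Finset.Icc (-(N : ℤ) - (K : ℤ)) ((N : ℤ) + (K : ℤ)),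
        dotProduct (w₀ q)
          ((2 : ℂ) ^ (j * n) • (∑ᶠ l : ℤ, (A (k - 2 ^ n * q - l)).mulVec (u l)) -
            β • iteratedDeriv j φ (x₀ - (q : ℝ))) := by
    rw [Finset.mul_sum, Finset.mul_sum, ← Finset.sum_sub_distrib]
    apply Finset.sum_congr rfl
    intro q _
    rw [dotProduct_sub, dotProduct_smul, dotProduct_smul,
      smul_eq_mul, smul_eq_mul]
  rw [hsum]
  have hBq : ∀ q ∈ Finset.Icc (-(N : ℤ) - (K : ℤ)) ((N : ℤ) + (K : ℤ)),
      ‖(2 : ℂ) ^ (j * n) • (∑ᶠ l : ℤ, (A (k - 2 ^ n * q - l)).mulVec (u l)) -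
      β • iteratedDeriv j φ (x₀ - (q : ℝ))‖ ≤ B := by
    intro q _
    have harg : ((2 : ℝ) ^ n)⁻¹ * (((k - 2 ^ n * q : ℤ)) : ℝ) = x₀ - (q : ℝ) := by
      rw [hx₀def]
      push_cast
      field_simp
    have h := hB (k - 2 ^ n * q)
    rw [harg] at h
    exact h
  calc ‖∑ q ∈ Finset.Icc (-(N : ℤ) - (K : ℤ)) ((N : ℤ) + (K : ℤ)),
        dotProduct (w₀ q)
          ((2 : ℂ) ^ (j * n) • (∑ᶠ l : ℤ, (A (k - 2 ^ n * q - l)).mulVec (u l)) -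
            β • iteratedDeriv j φ (x₀ - (q : ℝ)))‖ ≤
      ∑ q ∈ Finset.Icc (-(N : ℤ) - (K : ℤ)) ((N : ℤ) + (K : ℤ)),
        ‖dotProduct (w₀ q)
          ((2 : ℂ) ^ (j * n) • (∑ᶠ l : ℤ, (A (k - 2 ^ n * q - l)).mulVec (u l)) -
            β • iteratedDeriv j φ (x₀ - (q : ℝ)))‖ := norm_sum_le _ _
    _ ≤ ∑ q ∈ Finset.Icc (-(N : ℤ) - (K : ℤ)) ((N : ℤ) + (K : ℤ)),
          (∑ i : Fin r, ‖w₀ q i‖) * B := by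
        apply Finset.sum_le_sum
        intro q hq
        refine le_trans (abs_dot_le _ _) ?_
        exact mul_le_mul_of_nonneg_left (hBq q hq)
          (Finset.sum_nonneg fun i _ => norm_nonneg _)
    _ = (∑ q ∈ Finset.Icc (-(N : ℤ) - (K : ℤ)) ((N : ℤ) + (K : ℤ)),
          ∑ i : Fin r, ‖w₀ q i‖) * B := (Finset.sum_mul _ _ _).symm
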